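/- Let ρ be a density matrix and A a Hermitian operator on ℂ^n with eigenvalues a_k and orthonormal eigenvectors |a_k⟩, and write ρ_{kl} = ⟨a_k| ρ |a_l⟩. Then for every collection P of pairwise-disjoint pairs (k,l) of indices from {1,…,n}, the trace norm of the commutator satisfies ‖[ρ, A]‖₁ ≥ 2 Σ_{(k,l)∈P} |a_k − a_l| · |ρ_{kl}|; in particular ‖[ρ, A]‖₁ ≥ 2 max_{k,l} |a_k − a_l| · |ρ_{kl}|. -/

import Mathlib

open MeasureTheory Matrix Filter
open scoped BigOperators Kronecker InnerProductSpace ComplexOrder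

noncomputable section

namespace PQSM

variable {n : Type*} [Fintype n] [DecidableEq n]

instance : MeasurableSpace (EuclideanSpace ℂ n) := MeasurableSpace.comap WithLp.ofLp MeasurableSpace.pi

/-- The outer product (pure state density matrix) `|u⟩⟨u|` of a vector with itself. -/
def outer (u : EuclideanSpace ℂ n) : Matrix n n ℂ :=
  fun i j => u i * (starRingEnd ℂ) (u j)

/-- Operator norm of a matrix acting on Euclidean space. -/
def opNorm (A : Matrix n n ℂ) : ℝ := ‖Matrix.toEuclideanCLM (𝕜 := ℂ) A‖

/-- Trace norm `Tr √(AᴴA)`. -/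
def traceNorm (A : Matrix n n ℂ) : ℝ :=
  (((Matrix.posSemidef_conjTranspose_mul_self A).1.eigenvectorUnitary.1 *
    diagonal (((↑) : ℝ → ℂ) ∘ (√·) ∘ (Matrix.posSemidef_conjTranspose_mul_self A).1.eigenvalues) *
    (star (Matrix.posSemidef_conjTranspose_mul_self A).1.eigenvectorUnitary : Matrix n n ℂ)).trace).re

/-- Trace distance `½‖ρ − σ‖₁`. -/
def traceDist (ρ σ : Matrix n n ℂ) : ℝ := traceNorm (ρ - σ) / 2

/-- Real expectation value `Re Tr[B ρ]`. -/
def expVal (B ρ : Matrix n n ℂ) : ℝ := ((B * ρ).trace).re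

/-- Purity `Tr[ρ²]`. -/
def purity (ρ : Matrix n n ℂ) : ℝ := ((ρ * ρ).trace).re

/-- Effective dimension `1/Tr[ρ²]`. -/
def dEff (ρ : Matrix n n ℂ) : ℝ := 1 / purity ρ

/-- An orthogonal projector. -/
def IsProjector (P : Matrix n n ℂ) : Prop := P.IsHermitian ∧ P * P = P

/-- A density matrix: positive semidefinite with unit trace. -/
def IsDensityMatrix (ρ : Matrix n n ℂ) : Prop := ρ.PosSemidef ∧ ρ.trace = 1

/-- The microcanonical state `Π_R/d_R` of the subspace with projector `P` of dimension `dR`. -/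
def mcState (P : Matrix n n ℂ) (dR : ℕ) : Matrix n n ℂ := ((dR : ℂ))⁻¹ • P

/-- `μ` is the uniform (rotation-invariant, Haar) probability measure on the unit sphere of the
subspace of `ℂ^n` whose orthogonal projector is `P`: `μ` is a probability measure, it is
concentrated on the unit vectors fixed by `P`, and it is invariant under every unitary of the
full space that preserves the subspace (equivalently, commutes with `P`). -/
def IsUniformOnSphere (P : Matrix n n ℂ) (μ : Measure (EuclideanSpace ℂ n)) : Prop :=
  IsProbabilityMeasure μ ∧
  (∀ᵐ u ∂μ, ‖u‖ = 1 ∧ Matrix.toEuclideanCLM (𝕜 := ℂ) P u = u) ∧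
  ∀ U ∈ Matrix.unitaryGroup n ℂ,
    U * P = P * U →
    Measure.map (fun u => Matrix.toEuclideanCLM (𝕜 := ℂ) U u) μ = μ

/-- Non-degenerate energy gaps. -/
def HasNonDegenerateGaps {H : Matrix n n ℂ} (hH : H.IsHermitian) : Prop :=
  ∀ k l m p : n, hH.eigenvalues k - hH.eigenvalues l = hH.eigenvalues m - hH.eigenvalues p →
    (k = l ∧ m = p) ∨ (k = m ∧ l = p)

/-- Dephasing `$[ρ] = Σ_k |E_k⟩⟨E_k| ρ |E_k⟩⟨E_k|` with respect to the eigenbasis of `H`. -/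
def dephase {H : Matrix n n ℂ} (hH : H.IsHermitian) (ρ : Matrix n n ℂ) : Matrix n n ℂ :=
  ∑ k, outer (hH.eigenvectorBasis k) * ρ * outer (hH.eigenvectorBasis k)

/-- Time evolution `ρ_t = e^{−iHt} ρ e^{iHt}`. -/
def evol (H : Matrix n n ℂ) (t : ℝ) (ρ : Matrix n n ℂ) : Matrix n n ℂ :=
  NormedSpace.exp ((-(Complex.I * t)) • H) * ρ * NormedSpace.exp ((Complex.I * t) • H)

variable {nS nB : Type*} [Fintype nS] [Fintype nB]

/-- Partial trace over the second (bath) tensor factor. -/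
def ptraceB (M : Matrix (nS × nB) (nS × nB) ℂ) : Matrix nS nS ℂ :=
  fun i j => ∑ b, M (i, b) (j, b)

/-- Partial trace over the first (system) tensor factor. -/
def ptraceS (M : Matrix (nS × nB) (nS × nB) ℂ) : Matrix nB nB ℂ :=
  fun i j => ∑ a, M (a, i) (a, j)

/-- Tensor product of vectors. -/
def tensorVec (u : EuclideanSpace ℂ nS) (v : EuclideanSpace ℂ nB) :
    EuclideanSpace ℂ (nS × nB) := WithLp.toLp 2 (fun p => u p.1 * v p.2)

/-- Von Neumann entropy `−Σ λ_i log λ_i` (with `0 log 0 = 0`). -/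
def vnEntropy (ρ : Matrix n n ℂ) : ℝ :=
  if h : ρ.IsHermitian then -∑ i, h.eigenvalues i * Real.log (h.eigenvalues i) else 0

/-- Quantum mutual information `I_{SB}(ρ) = S(ρ^S) + S(ρ^B) − S(ρ)`. -/
def mutualInfo [DecidableEq nS] [DecidableEq nB] (ρ : Matrix (nS × nB) (nS × nB) ℂ) : ℝ :=
  vnEntropy (ptraceB ρ) + vnEntropy (ptraceS ρ) - vnEntropy ρ


section Aux15
variable {m : ℕ}


lemma aux15_eigCLM (H : Matrix (Fin m) (Fin m) ℂ) (hH : H.IsHermitian) (j : Fin m) :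
    Matrix.toEuclideanCLM (𝕜 := ℂ) H (hH.eigenvectorBasis j)
      = (hH.eigenvalues j : ℂ) • hH.eigenvectorBasis j := by
  have h := hH.mulVec_eigenvectorBasis j
  ext i
  have : (Matrix.toEuclideanCLM (𝕜 := ℂ) H (hH.eigenvectorBasis j)) i
      = (H *ᵥ ⇑(hH.eigenvectorBasis j)) i := rfl
  rw [this, h]; simp

lemma aux15_selfAdj (M : Matrix (Fin m) (Fin m) ℂ) (hM : M.IsHermitian) :
    _root_.IsSelfAdjoint (Matrix.toEuclideanCLM (𝕜 := ℂ) M) := by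
  rw [_root_.IsSelfAdjoint, ← map_star]
  congr 1

lemma aux15_expand (H : Matrix (Fin m) (Fin m) ℂ) (hH : H.IsHermitian) (x y : EuclideanSpace ℂ (Fin m)) :
    ⟪x, Matrix.toEuclideanCLM (𝕜 := ℂ) H y⟫_ℂ
      = ∑ j, (hH.eigenvalues j : ℂ)
          * (⟪x, hH.eigenvectorBasis j⟫_ℂ * ⟪hH.eigenvectorBasis j, y⟫_ℂ) := by
  conv_lhs => rw [← (hH.eigenvectorBasis).sum_repr' y]
  rw [map_sum, inner_sum]
  congr 1
  ext j
  rw [_root_.map_smul, inner_smul_right, aux15_eigCLM H hH, inner_smul_right]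
  ring

lemma aux15_traceNorm_eq (C : Matrix (Fin m) (Fin m) ℂ) (hC : Cᴴ = -C)
    (hH : (Complex.I • C).IsHermitian) :
    traceNorm C
      = ∑ j, |hH.eigenvalues j| := by
  set U : Matrix (Fin m) (Fin m) ℂ := (hH.eigenvectorUnitary : Matrix (Fin m) (Fin m) ℂ) with hU
  have hUU : star U * U = 1 := Matrix.UnitaryGroup.star_mul_self _
  set B : Matrix (Fin m) (Fin m) ℂ :=
    U * Matrix.diagonal (fun j => ((|hH.eigenvalues j| : ℝ) : ℂ)) * star U with hB
  have hBps : B.PosSemidef := by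
    apply Matrix.PosSemidef.mul_mul_conjTranspose_same
    rw [Matrix.posSemidef_diagonal_iff]
    intro i
    exact_mod_cast abs_nonneg _
  have hB2 : B ^ 2 = Cᴴ * C := by
    have hCC : Cᴴ * C = (Complex.I • C) * (Complex.I • C) := by
      rw [hC]; rw [Matrix.smul_mul, Matrix.mul_smul, smul_smul, Complex.I_mul_I]
      simp
    have key : ∀ D E : Matrix (Fin m) (Fin m) ℂ,
        (U * D * star U) * (U * E * star U) = U * (D * E) * star U := by
      intro D E
      simp only [Matrix.mul_assoc]
      rw [← Matrix.mul_assoc (star U) U (E * star U), hUU, Matrix.one_mul]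
    rw [hCC]
    conv_rhs => rw [hH.spectral_theorem, Unitary.conjStarAlgAut_apply]
    rw [pow_two, hB, key, key, Matrix.diagonal_mul_diagonal, Matrix.diagonal_mul_diagonal]
    have habs : (fun i => ((|hH.eigenvalues i| : ℝ) : ℂ) * ((|hH.eigenvalues i| : ℝ) : ℂ))
        = fun i => (RCLike.ofReal ∘ hH.eigenvalues) i * (RCLike.ofReal ∘ hH.eigenvalues) i := by
      funext i
      show ((|hH.eigenvalues i| : ℝ) : ℂ) * ((|hH.eigenvalues i| : ℝ) : ℂ)
          = ((hH.eigenvalues i : ℝ) : ℂ) * ((hH.eigenvalues i : ℝ) : ℂ)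
      exact_mod_cast congrArg Complex.ofReal (abs_mul_abs_self _)
    rw [habs]
  have hsq : traceNorm C = (B.trace).re := by
    have hCC := Matrix.posSemidef_conjTranspose_mul_self C
    have e1 : traceNorm C = ((cfc Real.sqrt (Cᴴ * C)).trace).re := by
      rw [hCC.1.cfc_eq, IsHermitian.cfc, Unitary.conjStarAlgAut_apply]
      rfl
    have e2 : cfc Real.sqrt (Cᴴ * C) = B := by
      open scoped MatrixOrder in
      have h0 : (0 : Matrix (Fin m) (Fin m) ℂ) ≤ Cᴴ * C := hCC.nonneg
      open scoped MatrixOrder in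
      have hb : (0 : Matrix (Fin m) (Fin m) ℂ) ≤ B := hBps.nonneg
      open scoped MatrixOrder in
      have := CFC.sqrt_unique (a := Cᴴ * C) (b := B) (by rw [← hB2, pow_two]) hb
      open scoped MatrixOrder in
      rw [CFC.sqrt_eq_real_sqrt _ h0, cfcₙ_eq_cfc] at this
      exact this
    rw [e1, e2]
  rw [hsq, hB]
  rw [Matrix.trace_mul_cycle, hUU, Matrix.one_mul, Matrix.trace_diagonal]
  simp

theorem aux15_main
    (n : ℕ) (ρ : Matrix (Fin n) (Fin n) ℂ) (hρ : ρ.PosSemidef)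
    (A : Matrix (Fin n) (Fin n) ℂ) (hA : A.IsHermitian)
    (a : Fin n → ℝ) (v : Fin n → EuclideanSpace ℂ (Fin n))
    (hv : Orthonormal ℂ v)
    (heig : ∀ k, Matrix.toEuclideanCLM (𝕜 := ℂ) A (v k) = (a k : ℂ) • v k) :
    (∀ P : Finset (Fin n × Fin n),
      (∀ p ∈ P, p.1 ≠ p.2) →
      (∀ p ∈ P, ∀ q ∈ P, p ≠ q → p.1 ≠ q.1 ∧ p.1 ≠ q.2 ∧ p.2 ≠ q.1 ∧ p.2 ≠ q.2) →
      2 * ∑ p ∈ P, |a p.1 - a p.2|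
          * ‖⟪v p.1, Matrix.toEuclideanCLM (𝕜 := ℂ) ρ (v p.2)⟫_ℂ‖
        ≤ traceNorm (ρ * A - A * ρ)) ∧
    ∀ k l : Fin n,
      2 * (|a k - a l| * ‖⟪v k, Matrix.toEuclideanCLM (𝕜 := ℂ) ρ (v l)⟫_ℂ‖)
        ≤ traceNorm (ρ * A - A * ρ) := by
  set C : Matrix (Fin n) (Fin n) ℂ := ρ * A - A * ρ with hCdef
  have hρH : ρ.IsHermitian := hρ.1
  have hC : Cᴴ = -C := by
    rw [hCdef, Matrix.conjTranspose_sub, Matrix.conjTranspose_mul, Matrix.conjTranspose_mul,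
      hρH.eq, hA.eq]
    rw [neg_sub]
  have hH : (Complex.I • C).IsHermitian := by
    rw [Matrix.IsHermitian, Matrix.conjTranspose_smul, hC]
    simp [smul_smul]
  set μ : Fin n → ℝ := hH.eigenvalues with hμ
  set u : Fin n → EuclideanSpace ℂ (Fin n) := fun j => hH.eigenvectorBasis j with hu
  have hun : Orthonormal ℂ u := hH.eigenvectorBasis.orthonormal
  have htr : traceNorm C = ∑ j, |μ j| :=
    aux15_traceNorm_eq C hC hH
  set T := Matrix.toEuclideanCLM (𝕜 := ℂ) C with hT
  set Tρ := Matrix.toEuclideanCLM (𝕜 := ℂ) ρ with hTρ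
  -- inner products of the commutator
  have innerC : ∀ k l : Fin n, ⟪v k, T (v l)⟫_ℂ
      = (((a l : ℂ) - (a k : ℂ))) * ⟪v k, Tρ (v l)⟫_ℂ := by
    intro k l
    have hsaA := aux15_selfAdj A hA
    have hTapp : T (v l) = Tρ (Matrix.toEuclideanCLM (𝕜 := ℂ) A (v l))
        - Matrix.toEuclideanCLM (𝕜 := ℂ) A (Tρ (v l)) := by
      rw [hT, hCdef, map_sub, _root_.map_mul, _root_.map_mul]
      simp [ContinuousLinearMap.mul_apply]
      rfl
    rw [hTapp, inner_sub_right, heig l, _root_.map_smul, inner_smul_right]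
    have h2 : ⟪v k, Matrix.toEuclideanCLM (𝕜 := ℂ) A (Tρ (v l))⟫_ℂ
        = (a k : ℂ) * ⟪v k, Tρ (v l)⟫_ℂ := by
      rw [← ContinuousLinearMap.adjoint_inner_left, ← ContinuousLinearMap.star_eq_adjoint,
        hsaA.star_eq, heig k, inner_smul_left, Complex.conj_ofReal]
    rw [h2]
    ring
  have hnormC : ∀ k l : Fin n, ‖⟪v k, T (v l)⟫_ℂ‖
      = |a k - a l| * ‖⟪v k, Tρ (v l)⟫_ℂ‖ := by
    intro k l
    rw [innerC, norm_mul]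
    congr 1
    rw [show ((a l : ℂ) - (a k : ℂ)) = ((a l - a k : ℝ) : ℂ) by push_cast; ring,
      Complex.norm_real, Real.norm_eq_abs, abs_sub_comm]
  have hsym : ∀ k l : Fin n, ‖⟪v l, Tρ (v k)⟫_ℂ‖ = ‖⟪v k, Tρ (v l)⟫_ℂ‖ := by
    intro k l
    have hsaρ := aux15_selfAdj ρ hρH
    rw [← ContinuousLinearMap.adjoint_inner_left, ← ContinuousLinearMap.star_eq_adjoint,
      hsaρ.star_eq, ← inner_conj_symm, RCLike.norm_conj]
  -- bound each |⟪x, T y⟫| via eigen-expansion of I • C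
  have hTS : ∀ x y : EuclideanSpace ℂ (Fin n), ‖⟪x, T y⟫_ℂ‖
      ≤ ∑ j, |μ j| * (‖⟪x, u j⟫_ℂ‖ * ‖⟪y, u j⟫_ℂ‖) := by
    intro x y
    have h1 : ⟪x, Matrix.toEuclideanCLM (𝕜 := ℂ) (Complex.I • C) y⟫_ℂ
        = Complex.I * ⟪x, T y⟫_ℂ := by
      rw [_root_.map_smul]
      simp [inner_smul_right]
      rfl
    have h2 : ‖⟪x, T y⟫_ℂ‖ = ‖⟪x, Matrix.toEuclideanCLM (𝕜 := ℂ) (Complex.I • C) y⟫_ℂ‖ := by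
      rw [h1, norm_mul, Complex.norm_I, one_mul]
    rw [h2, aux15_expand (Complex.I • C) hH]
    refine (norm_sum_le _ _).trans ?_
    refine Finset.sum_le_sum fun j _ => ?_
    rw [norm_mul, norm_mul]
    rw [show ‖((μ j : ℝ) : ℂ)‖ = |μ j| by rw [Complex.norm_real, Real.norm_eq_abs]]
    refine mul_le_mul_of_nonneg_left ?_ (abs_nonneg _)
    refine mul_le_mul_of_nonneg_left ?_ (norm_nonneg _)
    rw [← inner_conj_symm, RCLike.norm_conj]
  have hmain : ∀ P : Finset (Fin n × Fin n),
      (∀ p ∈ P, p.1 ≠ p.2) →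
      (∀ p ∈ P, ∀ q ∈ P, p ≠ q → p.1 ≠ q.1 ∧ p.1 ≠ q.2 ∧ p.2 ≠ q.1 ∧ p.2 ≠ q.2) →
      2 * ∑ p ∈ P, |a p.1 - a p.2| * ‖⟪v p.1, Tρ (v p.2)⟫_ℂ‖
        ≤ traceNorm C := by
    intro P hne hdisj
    have key : ∀ p ∈ P, 2 * (|a p.1 - a p.2| * ‖⟪v p.1, Tρ (v p.2)⟫_ℂ‖)
        ≤ ∑ j, |μ j| * (‖⟪v p.1, u j⟫_ℂ‖ ^ 2 + ‖⟪v p.2, u j⟫_ℂ‖ ^ 2) := by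
      intro p hp
      have h1 := hTS (v p.1) (v p.2)
      have h2 := hTS (v p.2) (v p.1)
      have e1 := hnormC p.1 p.2
      have e2 := hnormC p.2 p.1
      have hssum : |a p.1 - a p.2| * ‖⟪v p.1, Tρ (v p.2)⟫_ℂ‖
            + |a p.2 - a p.1| * ‖⟪v p.2, Tρ (v p.1)⟫_ℂ‖
          ≤ ∑ j, |μ j| * (‖⟪v p.1, u j⟫_ℂ‖ * ‖⟪v p.2, u j⟫_ℂ‖)
            + ∑ j, |μ j| * (‖⟪v p.2, u j⟫_ℂ‖ * ‖⟪v p.1, u j⟫_ℂ‖) := by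
        rw [← e1, ← e2]
        exact add_le_add h1 h2
      rw [hsym p.1 p.2, abs_sub_comm (a p.2)] at hssum
      have hlhs : 2 * (|a p.1 - a p.2| * ‖⟪v p.1, Tρ (v p.2)⟫_ℂ‖)
          = |a p.1 - a p.2| * ‖⟪v p.1, Tρ (v p.2)⟫_ℂ‖
            + |a p.1 - a p.2| * ‖⟪v p.1, Tρ (v p.2)⟫_ℂ‖ := by ring
      rw [hlhs]
      refine hssum.trans ?_
      rw [← Finset.sum_add_distrib]
      refine Finset.sum_le_sum fun j _ => ?_
      have hab := two_mul_le_add_sq ‖⟪v p.1, u j⟫_ℂ‖ ‖⟪v p.2, u j⟫_ℂ‖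
      nlinarith [abs_nonneg (μ j), norm_nonneg ⟪v p.1, u j⟫_ℂ, norm_nonneg ⟪v p.2, u j⟫_ℂ]
    -- sum over P
    have step1 : 2 * ∑ p ∈ P, |a p.1 - a p.2| * ‖⟪v p.1, Tρ (v p.2)⟫_ℂ‖
        ≤ ∑ p ∈ P, ∑ j, |μ j| * (‖⟪v p.1, u j⟫_ℂ‖ ^ 2 + ‖⟪v p.2, u j⟫_ℂ‖ ^ 2) := by
      rw [Finset.mul_sum]
      exact Finset.sum_le_sum fun p hp => by
        have := key p hp; linarith [this]
    have step2 : ∑ p ∈ P, ∑ j, |μ j| * (‖⟪v p.1, u j⟫_ℂ‖ ^ 2 + ‖⟪v p.2, u j⟫_ℂ‖ ^ 2)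
        ≤ ∑ j, |μ j| := by
      rw [Finset.sum_comm]
      refine Finset.sum_le_sum fun j _ => ?_
      rw [← Finset.mul_sum]
      have hbes : ∑ p ∈ P, (‖⟪v p.1, u j⟫_ℂ‖ ^ 2 + ‖⟪v p.2, u j⟫_ℂ‖ ^ 2) ≤ 1 := by
        have hdis : (P : Set (Fin n × Fin n)).PairwiseDisjoint
            (fun p : Fin n × Fin n => ({p.1, p.2} : Finset (Fin n))) := by
          intro p hp q hq hpq
          have h := hdisj p hp q hq hpq
          refine Finset.disjoint_left.mpr fun x hx hx' => ?_
          have hx1 : x = p.1 ∨ x = p.2 := by simpa using hx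
          have hx2 : x = q.1 ∨ x = q.2 := by simpa using hx'
          rcases hx1 with rfl | rfl <;> rcases hx2 with h2 | h2
          · exact h.1 h2
          · exact h.2.1 h2
          · exact h.2.2.1 h2
          · exact h.2.2.2 h2
        have hsum : ∑ p ∈ P, (‖⟪v p.1, u j⟫_ℂ‖ ^ 2 + ‖⟪v p.2, u j⟫_ℂ‖ ^ 2)
            = ∑ k ∈ P.biUnion (fun p => {p.1, p.2}), ‖⟪v k, u j⟫_ℂ‖ ^ 2 := by
          rw [Finset.sum_biUnion hdis]
          refine Finset.sum_congr rfl fun p hp => ?_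
          rw [Finset.sum_pair (hne p hp)]
        rw [hsum]
        have := hv.sum_inner_products_le (u j) (s := P.biUnion (fun p => {p.1, p.2}))
        have hu1 : ‖u j‖ = 1 := hun.1 j
        rw [hu1] at this
        simpa using this
      calc |μ j| * ∑ p ∈ P, (‖⟪v p.1, u j⟫_ℂ‖ ^ 2 + ‖⟪v p.2, u j⟫_ℂ‖ ^ 2)
          ≤ |μ j| * 1 := mul_le_mul_of_nonneg_left hbes (abs_nonneg _)
        _ = |μ j| := mul_one _
    rw [htr]
    exact step1.trans step2
  refine ⟨hmain, ?_⟩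
  intro k l
  by_cases hkl : k = l
  · subst hkl
    simp only [sub_self, abs_zero, zero_mul, mul_zero]
    rw [htr]
    exact Finset.sum_nonneg fun j _ => abs_nonneg _
  · have h := hmain {(k, l)}
      (by intro p hp; rw [Finset.mem_singleton] at hp; subst hp; exact hkl)
      (by intro p hp q hq hpq
          rw [Finset.mem_singleton] at hp hq
          exact absurd (hp.trans hq.symm) hpq)
    simpa [mul_assoc] using h


end Aux15

/-- lower bound on the trace norm of the commutator of a state with a Hermitian
observable: `‖[ρ,A]‖₁ ≥ 2 Σ_{(k,l)∈P} |a_k − a_l||ρ_{kl}|` for every collection `P` of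
pairwise-disjoint index pairs, and in particular `‖[ρ,A]‖₁ ≥ 2|a_k − a_l||ρ_{kl}|` for all
`k, l`. -/
theorem commutator_trace_norm_lower_bound
    (n : ℕ) (ρ : Matrix (Fin n) (Fin n) ℂ) (hρ : IsDensityMatrix ρ)
    (A : Matrix (Fin n) (Fin n) ℂ) (hA : A.IsHermitian)
    (a : Fin n → ℝ) (v : Fin n → EuclideanSpace ℂ (Fin n))
    (hv : Orthonormal ℂ v)
    (heig : ∀ k, Matrix.toEuclideanCLM (𝕜 := ℂ) A (v k) = (a k : ℂ) • v k) :
    (∀ P : Finset (Fin n × Fin n),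
      (∀ p ∈ P, p.1 ≠ p.2) →
      (∀ p ∈ P, ∀ q ∈ P, p ≠ q → p.1 ≠ q.1 ∧ p.1 ≠ q.2 ∧ p.2 ≠ q.1 ∧ p.2 ≠ q.2) →
      2 * ∑ p ∈ P, |a p.1 - a p.2|
          * ‖⟪v p.1, Matrix.toEuclideanCLM (𝕜 := ℂ) ρ (v p.2)⟫_ℂ‖
        ≤ traceNorm (ρ * A - A * ρ)) ∧
    ∀ k l : Fin n,
      2 * (|a k - a l| * ‖⟪v k, Matrix.toEuclideanCLM (𝕜 := ℂ) ρ (v l)⟫_ℂ‖)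
        ≤ traceNorm (ρ * A - A * ρ) := by
  exact aux15_main n ρ hρ.1 A hA a v hv heig

end PQSM
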